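/- Let a1, a2, a3, b1, b3, c, t be real numbers with a1 + 2t·b1 ≠ 0 and a1·a2 = 1 + a3². Define a1′ = (a1·b1 + c·(1 − 3a3² − 4t·a3·b3))/(a1 + 2t·b1), a3′ = (a1·b3 − 2c·a2·(a3 + t·b3))/(a1 + 2t·b1), and a2′ = (2·a3·b3 − a2·b1 − c·a2²)/(a1 + 2t·b1). Then a1·a2′ + a1′·a2 = 2·a3·a3′. -/

import Mathlib

theorem stmt_8 (a1 a2 a3 b1 b3 c t : ℝ) (hden : a1 + 2 * t * b1 ≠ 0)
    (halg : a1 * a2 = 1 + a3 ^ 2)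
    (a1' a2' a3' : ℝ)
    (h1 : a1' = (a1 * b1 + c * (1 - 3 * a3 ^ 2 - 4 * t * a3 * b3)) / (a1 + 2 * t * b1))
    (h3 : a3' = (a1 * b3 - 2 * c * a2 * (a3 + t * b3)) / (a1 + 2 * t * b1))
    (h2 : a2' = (2 * a3 * b3 - a2 * b1 - c * a2 ^ 2) / (a1 + 2 * t * b1)) :
    a1 * a2' + a1' * a2 = 2 * a3 * a3' := by
  subst h1 h2 h3
  field_simp
  linear_combination (-(c*a2)/(a1 + 2 * t * b1)) * halg
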